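/- Let $g:(0,\infty)\to[0,\infty]$ be nonincreasing, $S_n=(2^{-(n+1)},2^{-n}]$, $c\in(0,1)$, $N\in\mathbb N$, and $B\subseteq(0,\infty)$ measurable with $\lambda(B\cap S_n)\le c\,2^{-(n+1)}$ for all $n\ge N$. If $\int_{(0,\infty)\setminus B} g\,d\lambda<\infty$, then $\int_0^{2^{-N}} g\,d\lambda<\infty$. -/

import Mathlib

open MeasureTheory

/-- Summed shell comparison: if a measurable `B ⊆ (0,∞)` occupies at most a
fraction `c` of each shell `S_n = (2^{-(n+1)}, 2^{-n}]` for `n ≥ N`, and `g` is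
nonincreasing on `(0,∞)` with `∫_{(0,∞)\B} g < ∞`, then `∫_0^{2^{-N}} g < ∞`. -/
theorem stmt8 (g : ℝ → ENNReal) (hg : AntitoneOn g (Set.Ioi 0))
    (c : ℝ) (hc : c ∈ Set.Ioo (0:ℝ) 1) (N : ℕ)
    (B : Set ℝ) (hB : MeasurableSet B) (hB0 : B ⊆ Set.Ioi 0)
    (hmeas : ∀ n : ℕ, N ≤ n →
      volume (B ∩ Set.Ioc ((2:ℝ) ^ (-((n:ℝ) + 1))) ((2:ℝ) ^ (-(n:ℝ))))
        ≤ ENNReal.ofReal (c * (2:ℝ) ^ (-((n:ℝ) + 1))))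
    (hfin : ∫⁻ x in Set.Ioi (0:ℝ) \ B, g x < ⊤) :
    ∫⁻ x in Set.Ioc (0:ℝ) ((2:ℝ) ^ (-(N:ℝ))), g x < ⊤ := by
  obtain ⟨hc0, hc1⟩ := hc
  set t : ℕ → ℝ := fun n => (1/2 : ℝ) ^ n with ht
  have htpos : ∀ n, 0 < t n := fun n => pow_pos (by norm_num) n
  have htr : ∀ n : ℕ, (2:ℝ) ^ (-(n:ℝ)) = t n := by
    intro n
    rw [ht, Real.rpow_neg (by norm_num), Real.rpow_natCast]
    simp [one_div, inv_pow]
  have htr' : ∀ n : ℕ, (2:ℝ) ^ (-((n:ℝ)+1)) = t (n+1) := by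
    intro n
    rw [← htr (n+1)]
    push_cast
    rfl
  have hdouble : ∀ n, t n = 2 * t (n+1) := by
    intro n; simp [ht, pow_succ]
  have htanti : ∀ {m n : ℕ}, m ≤ n → t n ≤ t m := by
    intro m n hmn
    exact pow_le_pow_of_le_one (by norm_num) (by norm_num) hmn
  set S : ℕ → Set ℝ := fun n => Set.Ioc (t (n+1)) (t n) with hS
  have hSm : ∀ n, MeasurableSet (S n) := fun n => measurableSet_Ioc
  have hSsub : ∀ n, S n ⊆ Set.Ioi 0 := by
    intro n x hx
    exact lt_trans (htpos (n+1)) hx.1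
  have volS : ∀ n, volume (S n) = ENNReal.ofReal (t (n+1)) := by
    intro n
    rw [hS, Real.volume_Ioc]
    congr 1
    rw [hdouble n]; ring
  have hmeas' : ∀ n : ℕ, N ≤ n → volume (S n ∩ B) ≤ ENNReal.ofReal (c * t (n+1)) := by
    intro n hn
    have := hmeas n hn
    rw [htr n, htr' n, Set.inter_comm] at this
    exact this
  have hSdisj : ∀ m n : ℕ, m < n → Disjoint (S m) (S n) := by
    intro m n hmn
    apply Set.disjoint_left.mpr
    intro x hx hx'
    have h1 : x ≤ t n := hx'.2
    have h2 : t n ≤ t (m+1) := htanti hmn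
    have h3 : t (m+1) < x := hx.1
    linarith
  -- key per-shell estimate
  set K : ENNReal := ENNReal.ofReal (2*c/(1-c)) with hK
  have hKt : K ≠ ⊤ := ENNReal.ofReal_ne_top
  have key : ∀ n : ℕ, N ≤ n →
      ∫⁻ x in S n, g x ≤ (∫⁻ x in S n \ B, g x) + K * ∫⁻ x in S (n+1) \ B, g x := by
    intro n hn
    have hsplit : ∫⁻ x in S n, g x = (∫⁻ x in S n ∩ B, g x) + ∫⁻ x in S n \ B, g x := by
      rw [← lintegral_union ((hSm n).diff hB) (Disjoint.mono_left
        Set.inter_subset_right Set.disjoint_sdiff_right), Set.inter_union_diff]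
    have hub : ∫⁻ x in S n ∩ B, g x ≤ ENNReal.ofReal (c * t (n+1)) * g (t (n+1)) := by
      calc ∫⁻ x in S n ∩ B, g x ≤ ∫⁻ _ in S n ∩ B, g (t (n+1)) := by
            apply setLIntegral_mono' ((hSm n).inter hB)
            intro x hx
            exact hg (Set.mem_Ioi.mpr (htpos (n+1))) (hSsub n hx.1) (le_of_lt hx.1.1)
        _ = g (t (n+1)) * volume (S n ∩ B) := setLIntegral_const _ _
        _ ≤ g (t (n+1)) * ENNReal.ofReal (c * t (n+1)) := by
            exact mul_le_mul_right (hmeas' n hn) _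
        _ = ENNReal.ofReal (c * t (n+1)) * g (t (n+1)) := mul_comm _ _
    have hvol : ENNReal.ofReal ((1-c) * t (n+2)) ≤ volume (S (n+1) \ B) := by
      have hd : S (n+1) \ B = S (n+1) \ (S (n+1) ∩ B) := by
        ext x; simp only [Set.mem_diff, Set.mem_inter_iff]; tauto
      rw [hd, measure_diff Set.inter_subset_left ((hSm (n+1)).inter hB).nullMeasurableSet
        (ne_top_of_le_ne_top (by simp [volS]) (measure_mono Set.inter_subset_left)),
        volS (n+1)]
      have h2 : volume (S (n+1) ∩ B) ≤ ENNReal.ofReal (c * t (n+2)) :=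
        hmeas' (n+1) (le_trans hn (Nat.le_succ n))
      calc ENNReal.ofReal ((1-c) * t (n+2))
          = ENNReal.ofReal (t (n+2)) - ENNReal.ofReal (c * t (n+2)) := by
            rw [← ENNReal.ofReal_sub _ (mul_nonneg hc0.le (htpos _).le)]
            congr 1; ring
        _ ≤ ENNReal.ofReal (t (n+2)) - volume (S (n+1) ∩ B) := tsub_le_tsub_left h2 _
    have hlb : g (t (n+1)) * ENNReal.ofReal ((1-c) * t (n+2)) ≤ ∫⁻ x in S (n+1) \ B, g x := by
      calc g (t (n+1)) * ENNReal.ofReal ((1-c) * t (n+2))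
          ≤ g (t (n+1)) * volume (S (n+1) \ B) := mul_le_mul_right hvol _
        _ = ∫⁻ _ in S (n+1) \ B, g (t (n+1)) := (setLIntegral_const _ _).symm
        _ ≤ ∫⁻ x in S (n+1) \ B, g x := by
            apply setLIntegral_mono' ((hSm (n+1)).diff hB)
            intro x hx
            exact hg (hSsub (n+1) hx.1) (Set.mem_Ioi.mpr (htpos (n+1))) hx.1.2
    have hcoef : ENNReal.ofReal (c * t (n+1)) = K * ENNReal.ofReal ((1-c) * t (n+2)) := by
      rw [hK, ← ENNReal.ofReal_mul (div_nonneg (by linarith) (by linarith))]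
      congr 1
      have h1c : (1:ℝ) - c ≠ 0 := by linarith
      rw [show t (n+1) = 2 * t (n+2) from hdouble (n+1)]
      field_simp
    have : ∫⁻ x in S n ∩ B, g x ≤ K * ∫⁻ x in S (n+1) \ B, g x := by
      calc ∫⁻ x in S n ∩ B, g x ≤ ENNReal.ofReal (c * t (n+1)) * g (t (n+1)) := hub
        _ = K * (g (t (n+1)) * ENNReal.ofReal ((1-c) * t (n+2))) := by
            rw [hcoef]; ring
        _ ≤ K * ∫⁻ x in S (n+1) \ B, g x := mul_le_mul_right hlb _
    rw [hsplit, add_comm]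
    exact add_le_add_right this _
  -- the union of shells
  have hUnion : Set.Ioc (0:ℝ) (t N) = ⋃ k, S (N + k) := by
    ext x
    constructor
    · rintro ⟨hx0, hxN⟩
      have hex : ∃ k, t (N + k + 1) < x := by
        obtain ⟨k, hk⟩ := exists_pow_lt_of_lt_one hx0 (by norm_num : (1/2:ℝ) < 1)
        exact ⟨k, lt_of_le_of_lt (htanti (by omega)) hk⟩
      have hk1 := Nat.find_spec hex
      refine Set.mem_iUnion.mpr ⟨Nat.find hex, hk1, ?_⟩
      rcases Nat.eq_zero_or_pos (Nat.find hex) with h0 | hpos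
      · rw [h0]; simpa using hxN
      · have hmin := Nat.find_min hex (Nat.sub_lt hpos one_pos)
        push_neg at hmin
        have : N + (Nat.find hex - 1) + 1 = N + Nat.find hex := by omega
        rw [this] at hmin
        exact hmin
    · intro hx
      obtain ⟨k, hk⟩ := Set.mem_iUnion.mp hx
      exact ⟨lt_trans (htpos _) hk.1, le_trans hk.2 (htanti (Nat.le_add_right N k))⟩
  -- summing over disjoint families
  have hsum : ∀ a : ℕ, ∑' k : ℕ, ∫⁻ x in S (a + k) \ B, g x ≤ ∫⁻ x in Set.Ioi (0:ℝ) \ B, g x := by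
    intro a
    rw [← lintegral_iUnion (fun k => (hSm (a+k)).diff hB) (by
      intro i j hij
      rcases lt_or_gt_of_ne hij with h | h
      · exact (hSdisj _ _ (by omega)).mono Set.diff_subset Set.diff_subset
      · exact (hSdisj _ _ (by omega)).symm.mono Set.diff_subset Set.diff_subset)]
    apply lintegral_mono_set
    apply Set.iUnion_subset
    intro k
    exact Set.diff_subset_diff_left (hSsub (a+k))
  have hIeq : ∫⁻ x in Set.Ioc (0:ℝ) (t N), g x = ∑' k : ℕ, ∫⁻ x in S (N + k), g x := by
    rw [hUnion]
    exact lintegral_iUnion (fun k => hSm (N+k)) (by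
      intro i j hij
      rcases lt_or_gt_of_ne hij with h | h
      · exact hSdisj _ _ (by omega)
      · exact (hSdisj _ _ (by omega)).symm) g
  have hmain : ∫⁻ x in Set.Ioc (0:ℝ) (t N), g x
      ≤ (∫⁻ x in Set.Ioi (0:ℝ) \ B, g x) + K * ∫⁻ x in Set.Ioi (0:ℝ) \ B, g x := by
    rw [hIeq]
    calc ∑' k : ℕ, ∫⁻ x in S (N + k), g x
        ≤ ∑' k : ℕ, ((∫⁻ x in S (N + k) \ B, g x) + K * ∫⁻ x in S (N + k + 1) \ B, g x) :=
          ENNReal.tsum_le_tsum (fun k => key (N+k) (Nat.le_add_right N k))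
      _ = (∑' k : ℕ, ∫⁻ x in S (N + k) \ B, g x)
          + K * ∑' k : ℕ, ∫⁻ x in S (N + k + 1) \ B, g x := by
          rw [ENNReal.tsum_add, ENNReal.tsum_mul_left]
      _ ≤ (∫⁻ x in Set.Ioi (0:ℝ) \ B, g x) + K * ∫⁻ x in Set.Ioi (0:ℝ) \ B, g x := by
          gcongr
          · exact hsum N
          · have : ∀ k : ℕ, N + k + 1 = (N + 1) + k := by omega
            calc ∑' k : ℕ, ∫⁻ x in S (N + k + 1) \ B, g x
                = ∑' k : ℕ, ∫⁻ x in S ((N + 1) + k) \ B, g x := by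
                  congr 1; ext k; rw [this k]
              _ ≤ _ := hsum (N+1)
  rw [htr N]
  calc ∫⁻ x in Set.Ioc (0:ℝ) (t N), g x
      ≤ (∫⁻ x in Set.Ioi (0:ℝ) \ B, g x) + K * ∫⁻ x in Set.Ioi (0:ℝ) \ B, g x := hmain
    _ < ⊤ := by
        apply ENNReal.add_lt_top.mpr
        exact ⟨hfin, ENNReal.mul_lt_top hKt.lt_top hfin⟩
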